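/- For Δ0 formulas φ and ψ, φ entails ψ over all (possibly non-extensional) general models if and only if every nested relation (extensional well-typed model) satisfying φ also satisfies ψ. -/

import Mathlib

inductive NTy : Type
  | ur : NTy
  | unit : NTy
  | prod : NTy → NTy → NTy
  | set : NTy → NTy
deriving DecidableEq

def NObj (U : Type) : NTy → Type
  | .ur => U
  | .unit => Unit
  | .prod a b => NObj U a × NObj U b
  | .set a => Set (NObj U a)

def NObj.asSet {U : Type} {T : NTy} (s : NObj U (NTy.set T)) : Set (NObj U T) := s

def Env (U : Type) (Γ : List NTy) : Type := (i : Fin Γ.length) → NObj U (Γ.get i)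

def Env.nil {U : Type} : Env U [] := fun i => i.elim0

def Env.cons {U : Type} {T : NTy} {Γ : List NTy} (x : NObj U T) (ρ : Env U Γ) :
    Env U (T :: Γ) := fun i =>
  Fin.cases (motive := fun i => NObj U ((T :: Γ).get i)) x (fun j => ρ j) i

inductive Tm : List NTy → NTy → Type
  | var {Γ} (i : Fin Γ.length) : Tm Γ (Γ.get i)
  | unit {Γ} : Tm Γ NTy.unit
  | pair {Γ a b} : Tm Γ a → Tm Γ b → Tm Γ (NTy.prod a b)
  | fst {Γ a b} : Tm Γ (NTy.prod a b) → Tm Γ a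
  | snd {Γ a b} : Tm Γ (NTy.prod a b) → Tm Γ b

def Tm.eval {U : Type} : ∀ {Γ T}, Tm Γ T → Env U Γ → NObj U T
  | _, _, .var i, ρ => ρ i
  | _, _, .unit, _ => ()
  | _, _, .pair s t, ρ => (s.eval ρ, t.eval ρ)
  | _, _, .fst t, ρ => (t.eval ρ).1
  | _, _, .snd t, ρ => (t.eval ρ).2

inductive D0 : List NTy → Type
  | eq {Γ} : Tm Γ NTy.ur → Tm Γ NTy.ur → D0 Γ
  | ne {Γ} : Tm Γ NTy.ur → Tm Γ NTy.ur → D0 Γ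
  | tru {Γ} : D0 Γ
  | fls {Γ} : D0 Γ
  | and {Γ} : D0 Γ → D0 Γ → D0 Γ
  | or {Γ} : D0 Γ → D0 Γ → D0 Γ
  | all {Γ T} : Tm Γ (NTy.set T) → D0 (T :: Γ) → D0 Γ
  | ex {Γ T} : Tm Γ (NTy.set T) → D0 (T :: Γ) → D0 Γ

def D0.Sat {U : Type} : ∀ {Γ}, D0 Γ → Env U Γ → Prop
  | _, .eq s t, ρ => s.eval ρ = t.eval ρ
  | _, .ne s t, ρ => s.eval ρ ≠ t.eval ρ
  | _, .tru, _ => True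
  | _, .fls, _ => False
  | _, .and φ ψ, ρ => φ.Sat ρ ∧ ψ.Sat ρ
  | _, .or φ ψ, ρ => φ.Sat ρ ∨ ψ.Sat ρ
  | _, .all t φ, ρ => ∀ x ∈ NObj.asSet (t.eval ρ), φ.Sat (Env.cons x ρ)
  | _, .ex t φ, ρ => ∃ x ∈ NObj.asSet (t.eval ρ), φ.Sat (Env.cons x ρ)

def Tm.fv : ∀ {Γ T}, Tm Γ T → Finset (Fin Γ.length)
  | _, _, .var i => {i}
  | _, _, .unit => ∅
  | _, _, .pair s t => s.fv ∪ t.fv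
  | _, _, .fst t => t.fv
  | _, _, .snd t => t.fv

def lowerFv {n : ℕ} (s : Finset (Fin (n + 1))) : Finset (Fin n) :=
  Finset.univ.filter (fun j => j.succ ∈ s)

def D0.fv : ∀ {Γ}, D0 Γ → Finset (Fin Γ.length)
  | _, .eq s t => s.fv ∪ t.fv
  | _, .ne s t => s.fv ∪ t.fv
  | _, .tru => ∅
  | _, .fls => ∅
  | _, .and φ ψ => φ.fv ∪ ψ.fv
  | _, .or φ ψ => φ.fv ∪ ψ.fv
  | _, .all t φ => t.fv ∪ lowerFv φ.fv
  | _, .ex t φ => t.fv ∪ lowerFv φ.fv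

/-- A *general model* of the nested relational vocabulary: a multi-sorted structure with a
sort for each type, typed membership relations, tupling and projections, a unit element,
subject only to the sanity axiom that projections commute with tupling. -/
structure GModel : Type 1 where
  carrier : NTy → Type
  mem : ∀ {T : NTy}, carrier T → carrier (NTy.set T) → Prop
  mkPair : ∀ {a b : NTy}, carrier a → carrier b → carrier (NTy.prod a b)
  pr1 : ∀ {a b : NTy}, carrier (NTy.prod a b) → carrier a
  pr2 : ∀ {a b : NTy}, carrier (NTy.prod a b) → carrier b
  star : carrier NTy.unit
  pr1_mkPair : ∀ {a b : NTy} (x : carrier a) (y : carrier b), pr1 (mkPair x y) = x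
  pr2_mkPair : ∀ {a b : NTy} (x : carrier a) (y : carrier b), pr2 (mkPair x y) = y

def GEnv (M : GModel) (Γ : List NTy) : Type := (i : Fin Γ.length) → M.carrier (Γ.get i)

def GEnv.nil {M : GModel} : GEnv M [] := fun i => i.elim0

def GEnv.cons {M : GModel} {T : NTy} {Γ : List NTy} (x : M.carrier T) (ρ : GEnv M Γ) :
    GEnv M (T :: Γ) := fun i =>
  Fin.cases (motive := fun i => M.carrier ((T :: Γ).get i)) x (fun j => ρ j) i

def Tm.gEval {M : GModel} : ∀ {Γ T}, Tm Γ T → GEnv M Γ → M.carrier T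
  | _, _, .var i, ρ => ρ i
  | _, _, .unit, _ => M.star
  | _, _, .pair s t, ρ => M.mkPair (s.gEval ρ) (t.gEval ρ)
  | _, _, .fst t, ρ => M.pr1 (t.gEval ρ)
  | _, _, .snd t, ρ => M.pr2 (t.gEval ρ)

/-- Satisfaction of a Δ₀ formula in a general model. -/
def D0.GSat {M : GModel} : ∀ {Γ}, D0 Γ → GEnv M Γ → Prop
  | _, .eq s t, ρ => s.gEval ρ = t.gEval ρ
  | _, .ne s t, ρ => s.gEval ρ ≠ t.gEval ρ
  | _, .tru, _ => True
  | _, .fls, _ => False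
  | _, .and φ ψ, ρ => φ.GSat ρ ∧ ψ.GSat ρ
  | _, .or φ ψ, ρ => φ.GSat ρ ∨ ψ.GSat ρ
  | _, .all t φ, ρ => ∀ x, M.mem x (t.gEval ρ) → φ.GSat (GEnv.cons x ρ)
  | _, .ex t φ, ρ => ∃ x, M.mem x (t.gEval ρ) ∧ φ.GSat (GEnv.cons x ρ)

/-- Standard model over urelements `U`. -/
def stdModel (U : Type) : GModel where
  carrier := NObj U
  mem := fun x s => x ∈ NObj.asSet s
  mkPair := Prod.mk
  pr1 := Prod.fst
  pr2 := Prod.snd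
  star := ()
  pr1_mkPair := fun _ _ => rfl
  pr2_mkPair := fun _ _ => rfl

lemma std_eval {U : Type} : ∀ {Γ T} (t : Tm Γ T) (ρ : GEnv (stdModel U) Γ),
    Tm.gEval t ρ = Tm.eval t ρ
  | _, _, .var i, ρ => by simp [Tm.gEval, Tm.eval]; exact (Tm.eval.eq_1 (U := U) _ ρ i).symm
  | _, _, .unit, _ => rfl
  | _, _, .pair s t, ρ => by simp [Tm.gEval, Tm.eval, std_eval s ρ, std_eval t ρ]; exact (Tm.eval.eq_3 (U := U) _ ρ _ _ s t).symm
  | _, _, .fst t, ρ => by simp [Tm.gEval, Tm.eval, std_eval t ρ]; exact (Tm.eval.eq_4 (U := U) (t := t) ..).symm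
  | _, _, .snd t, ρ => by simp [Tm.gEval, Tm.eval, std_eval t ρ]; exact (Tm.eval.eq_5 (U := U) (t := t) ..).symm

lemma std_sat {U : Type} : ∀ {Γ} (φ : D0 Γ) (ρ : GEnv (stdModel U) Γ),
    D0.GSat φ ρ ↔ D0.Sat φ ρ
  | _, .eq s t, ρ => by simp [D0.GSat, D0.Sat, std_eval]; exact Iff.rfl
  | _, .ne s t, ρ => by simp [D0.GSat, D0.Sat, std_eval]; exact Iff.rfl
  | _, .tru, _ => Iff.rfl
  | _, .fls, _ => Iff.rfl
  | _, .and φ ψ, ρ => by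
      simp [D0.GSat, D0.Sat, std_sat φ ρ, std_sat ψ ρ]
  | _, .or φ ψ, ρ => by
      simp [D0.GSat, D0.Sat, std_sat φ ρ, std_sat ψ ρ]
  | _, .all t φ, ρ => by
      simp only [D0.GSat, D0.Sat, std_eval]
      exact forall_congr' fun x => imp_congr Iff.rfl (std_sat φ _)
  | _, .ex t φ, ρ => by
      simp only [D0.GSat, D0.Sat, std_eval]
      exact exists_congr fun x => and_congr Iff.rfl (std_sat φ _)

/-- Collapse map from a general model into the nested hierarchy over its urelement sort. -/
def collapse (M : GModel) : ∀ (T : NTy), M.carrier T → NObj (M.carrier NTy.ur) T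
  | .ur, x => x
  | .unit, _ => ()
  | .prod a b, x => (collapse M a (M.pr1 x), collapse M b (M.pr2 x))
  | .set a, s => { y | ∃ x, M.mem x s ∧ collapse M a x = y }

def collapseEnv (M : GModel) {Γ : List NTy} (ρ : GEnv M Γ) : Env (M.carrier NTy.ur) Γ :=
  fun i => collapse M _ (ρ i)

lemma collapseEnv_cons (M : GModel) {T : NTy} {Γ : List NTy} (x : M.carrier T)
    (ρ : GEnv M Γ) :
    collapseEnv M (GEnv.cons x ρ) = Env.cons (collapse M T x) (collapseEnv M ρ) := by
  funext i
  refine Fin.cases ?_ (fun j => ?_) i <;> rfl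

lemma collapse_eval (M : GModel) : ∀ {Γ T} (t : Tm Γ T) (ρ : GEnv M Γ),
    Tm.eval t (collapseEnv M ρ) = collapse M T (Tm.gEval t ρ)
  | _, _, .var i, ρ => by simp [Tm.gEval, Tm.eval, collapseEnv]
  | _, _, .unit, _ => rfl
  | _, _, .pair s t, ρ => by
      simp [Tm.eval, Tm.gEval, collapse_eval M s ρ, collapse_eval M t ρ, collapse,
        M.pr1_mkPair, M.pr2_mkPair]; rfl
  | _, _, .fst t, ρ => by
      simp [Tm.eval, Tm.gEval, collapse_eval M t ρ, collapse]
  | _, _, .snd t, ρ => by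
      simp [Tm.eval, Tm.gEval, collapse_eval M t ρ, collapse]

lemma collapse_sat (M : GModel) : ∀ {Γ} (φ : D0 Γ) (ρ : GEnv M Γ),
    D0.GSat φ ρ ↔ D0.Sat φ (collapseEnv M ρ)
  | _, .eq s t, ρ => by
      simp [D0.GSat, D0.Sat, collapse_eval M s ρ, collapse_eval M t ρ, collapse]; exact Iff.rfl
  | _, .ne s t, ρ => by
      simp [D0.GSat, D0.Sat, collapse_eval M s ρ, collapse_eval M t ρ, collapse]; exact Iff.rfl
  | _, .tru, _ => Iff.rfl
  | _, .fls, _ => Iff.rfl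
  | _, .and φ ψ, ρ => by
      simp [D0.GSat, D0.Sat, collapse_sat M φ ρ, collapse_sat M ψ ρ]
  | _, .or φ ψ, ρ => by
      simp [D0.GSat, D0.Sat, collapse_sat M φ ρ, collapse_sat M ψ ρ]
  | _, .all t φ, ρ => by
      simp only [D0.GSat, D0.Sat, collapse_eval M t ρ]
      constructor
      · rintro h y hy
        obtain ⟨x, hx, rfl⟩ := hy
        rw [← collapseEnv_cons]
        exact (collapse_sat M φ _).mp (h x hx)
      · intro h x hx
        refine (collapse_sat M φ _).mpr ?_
        rw [collapseEnv_cons]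
        exact h _ ⟨x, hx, rfl⟩
  | _, .ex t φ, ρ => by
      simp only [D0.GSat, D0.Sat, collapse_eval M t ρ]
      constructor
      · rintro ⟨x, hx, hφ⟩
        refine ⟨collapse M _ x, ⟨x, hx, rfl⟩, ?_⟩
        rw [← collapseEnv_cons]
        exact (collapse_sat M φ _).mp hφ
      · rintro ⟨y, ⟨x, hx, rfl⟩, hφ⟩
        rw [← collapseEnv_cons] at hφ
        exact ⟨x, hx, (collapse_sat M φ _).mpr hφ⟩

/-- For Δ₀ formulas `φ` and `ψ`, entailment over all general (possibly non-extensional)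
models coincides with entailment over all nested relational (extensional, well-typed)
instances. -/
theorem d0_general_entailment_iff_nested {Γ : List NTy} (φ ψ : D0 Γ) :
    (∀ (M : GModel) (ρ : GEnv M Γ), φ.GSat ρ → ψ.GSat ρ) ↔
    (∀ (U : Type) (ρ : Env U Γ), φ.Sat ρ → ψ.Sat ρ) := by
  constructor
  · intro h U ρ hφ
    exact (std_sat ψ ρ).mp (h (stdModel U) ρ ((std_sat φ ρ).mpr hφ))
  · intro h M ρ hφ
    exact (collapse_sat M ψ ρ).mpr
      (h (M.carrier NTy.ur) (collapseEnv M ρ) ((collapse_sat M φ ρ).mp hφ))
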